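/- If Ω ⊂ ℝⁿ is an M-uniform domain with |Ω| ≥ c₀ > 0, then Ω contains an open ball of radius r₀, where r₀ > 0 depends only on M, n, and c₀. -/

import Mathlib

open MeasureTheory Metric Set Filter
open scoped ENNReal Topology


lemma aux_ball_subset {E : Type*} [NormedAddCommGroup E] [NormedSpace ℝ E]
    {Ω : Set E} (hΩ : IsOpen Ω) {z : E} (hz : z ∈ Ω) {r : ℝ}
    (hr : r ≤ infDist z (frontier Ω)) : ball z r ⊆ Ω := by
  have hdisj : ∀ w ∈ ball z r, w ∉ frontier Ω := by
    intro w hw hwf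
    have : infDist z (frontier Ω) ≤ dist z w := infDist_le_dist_of_mem hwf
    rw [dist_comm] at this
    exact absurd (lt_of_lt_of_le (mem_ball.mp hw) hr) (not_lt.mpr this)
  have hsub : ball z r ⊆ Ω ∪ (closure Ω)ᶜ := by
    intro w hw
    by_cases hwc : w ∈ closure Ω
    · rw [closure_eq_self_union_frontier] at hwc
      rcases hwc with h | h
      · exact Or.inl h
      · exact absurd h (hdisj w hw)
    · exact Or.inr hwc
  by_cases hr0 : 0 < r
  · exact (convex_ball z r).isPreconnected.subset_left_of_subset_union
      hΩ isClosed_closure.isOpen_compl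
      (disjoint_compl_right.mono_left subset_closure) hsub ⟨z, mem_ball_self hr0, hz⟩
  · intro w hw
    exact absurd (mem_ball.mp hw) (not_lt.mpr (le_trans (not_lt.mp hr0) dist_nonneg))


/-- `Ω` is an `M`-uniform domain. -/
def IsMUniformDomain {n : ℕ} (M : ℝ) (Ω : Set (EuclideanSpace ℝ (Fin n))) : Prop :=
  IsOpen Ω ∧ IsConnected Ω ∧
  ∀ x ∈ Ω, ∀ y ∈ Ω, ∃ γ : ℝ → EuclideanSpace ℝ (Fin n),
    ContinuousOn γ (Set.Icc 0 1) ∧ γ 0 = x ∧ γ 1 = y ∧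
    (∀ t ∈ Set.Icc (0:ℝ) 1, γ t ∈ Ω) ∧
    eVariationOn γ (Set.Icc 0 1) ≤ ENNReal.ofReal (M * dist x y) ∧
    ∀ t ∈ Set.Icc (0:ℝ) 1,
      (1 / M) * min (dist (γ t) x) (dist (γ t) y) ≤ infDist (γ t) (frontier Ω)

/-- If `Ω ⊂ ℝⁿ` is an `M`-uniform domain with `|Ω| ≥ c₀ > 0`, then `Ω` contains an
open ball of radius `r₀ = r₀(M, n, c₀) > 0`. -/
theorem stmt_4 {n : ℕ} (M c₀ : ℝ) (hM : 1 ≤ M) (hc₀ : 0 < c₀) :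
    ∃ r₀ > (0:ℝ), ∀ Ω : Set (EuclideanSpace ℝ (Fin n)), IsMUniformDomain M Ω →
      ENNReal.ofReal c₀ ≤ volume Ω → ∃ z, ball z r₀ ⊆ Ω := by
  have hM0 : (0:ℝ) < M := lt_of_lt_of_le one_pos hM
  by_cases hn : n = 0
  · subst hn
    refine ⟨1, one_pos, fun Ω hΩ _ => ?_⟩
    obtain ⟨z, hz⟩ := hΩ.2.1.nonempty
    exact ⟨z, fun w hw => by rwa [Subsingleton.elim w z]⟩
  -- choose d > 0 with volume of a ball of radius d smaller than c₀
  set V := volume (ball (0 : EuclideanSpace ℝ (Fin n)) 1) with hVdef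
  have hVtop : V ≠ ⊤ := measure_ball_lt_top.ne
  have htend : Tendsto (fun d : ℝ => ENNReal.ofReal (d ^ n) * V) (𝓝[>] 0) (𝓝 0) := by
    have h1 : Tendsto (fun d : ℝ => ENNReal.ofReal (d ^ n)) (𝓝[>] 0) (𝓝 0) := by
      have : Tendsto (fun d : ℝ => d ^ n) (𝓝[>] 0) (𝓝 0) := by
        have h := ((continuous_pow n).tendsto (0:ℝ)).mono_left
          (nhdsWithin_le_nhds (s := Set.Ioi (0:ℝ)))
        simpa [zero_pow hn] using h
      simpa [Function.comp_def] using (ENNReal.continuous_ofReal.tendsto 0).comp this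
    simpa using ENNReal.Tendsto.mul_const h1 (Or.inr hVtop)
  have hlt : ∀ᶠ d in 𝓝[>] (0:ℝ), ENNReal.ofReal (d ^ n) * V < ENNReal.ofReal c₀ :=
    htend.eventually_lt_const (by simpa using hc₀)
  obtain ⟨d, hdlt, hd0⟩ := (hlt.and self_mem_nhdsWithin).exists
  refine ⟨d / (2 * M), by positivity, fun Ω hΩ hvol => ?_⟩
  obtain ⟨hopen, hconn, hcurve⟩ := hΩ
  -- find two far points
  have hfar : ∃ x ∈ Ω, ∃ y ∈ Ω, d < dist x y := by
    by_contra h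
    push_neg at h
    obtain ⟨x₀, hx₀⟩ := hconn.nonempty
    have hsub : Ω ⊆ closedBall x₀ d := fun y hy => by
      rw [mem_closedBall, dist_comm]; exact h x₀ hx₀ y hy
    have hle := (measure_mono hsub).trans_eq
      (Measure.addHaar_closedBall volume x₀ (le_of_lt hd0))
    rw [finrank_euclideanSpace_fin] at hle
    exact absurd (hvol.trans hle) (not_le.mpr hdlt)
  obtain ⟨x, hx, y, hy, hxy⟩ := hfar
  obtain ⟨γ, hcont, h0, h1, hmem, _, hdistf⟩ := hcurve x hx y hy
  -- intermediate value: point equidistant to x and y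
  set f : ℝ → ℝ := fun t => dist (γ t) x - dist (γ t) y with hf
  have hfc : ContinuousOn f (Icc 0 1) :=
    (((continuous_id.dist continuous_const).comp_continuousOn hcont).sub
      ((continuous_id.dist continuous_const).comp_continuousOn hcont))
  have hmem0 : (0:ℝ) ∈ Icc (f 0) (f 1) := by
    constructor
    · simp [hf, h0, h1, dist_comm]
    · simp [hf, h0, h1, dist_comm]
  obtain ⟨t, ht, hft⟩ := intermediate_value_Icc zero_le_one hfc hmem0
  have heq : dist (γ t) x = dist (γ t) y := by
    have := sub_eq_zero.mp hft
    simpa [hf] using this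
  have h2 : dist x y ≤ 2 * dist (γ t) x := by
    have := dist_triangle x (γ t) y
    rw [dist_comm x (γ t)] at this
    linarith [heq ▸ this]
  have hinf : d / (2 * M) ≤ infDist (γ t) (frontier Ω) := by
    have hmin := hdistf t ht
    rw [min_eq_left (le_of_eq heq)] at hmin
    have : d / (2 * M) ≤ (1 / M) * dist (γ t) x := by
      rw [div_le_iff₀ (by positivity), one_div]
      have : d ≤ 2 * dist (γ t) x := le_of_lt (lt_of_lt_of_le hxy h2)
      calc d ≤ 2 * dist (γ t) x := this
        _ = M⁻¹ * dist (γ t) x * (2 * M) := by field_simp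
    exact this.trans hmin
  exact ⟨γ t, aux_ball_subset hopen (hmem t ht) hinf⟩
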